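/- Let F(x,t) = Σ_{n≥0} Σ_{μ ∈ M_n} t^{asc(μ)} x^n be the bivariate generating function for Motzkin paths by length and number of ascents, as a formal power series in x with polynomial coefficients in t. Then F satisfies the functional equation (x² + x³(t−1))·F(x,t)² − (1 − x − x²(t−1))·F(x,t) + 1 = 0. -/

import Mathlib

inductive Step : Type
  | U | F | D
  deriving DecidableEq

instance instFintypeStep : Fintype Step :=
  ⟨⟨{Step.U, Step.F, Step.D}, by decide⟩, fun x => by cases x <;> decide⟩

def stepVal : Step → ℤ
  | .U => 1
  | .F => 0
  | .D => -1

/-- Height of the path after the first `i` steps. -/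
def ht (p : List Step) (i : ℕ) : ℤ := ((p.take i).map stepVal).sum

/-- A Motzkin path: starts and ends at height 0 and stays nonnegative. -/
def IsMotzkin (p : List Step) : Prop :=
  ht p p.length = 0 ∧ ∀ i ≤ p.length, 0 ≤ ht p i

instance : DecidablePred IsMotzkin := fun p => by
  unfold IsMotzkin; infer_instance

/-- Number of ascents: maximal runs of up steps (counted at their last up step). -/
def asc (p : List Step) : ℕ :=
  ((List.range p.length).filter
    (fun i => p[i]? == some Step.U && p[i+1]? != some Step.U)).length

/-- Number of occurrences of `w` as a consecutive subword of `p`. -/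
def countSubword (w p : List Step) : ℕ :=
  ((List.range p.length).filter (fun i => w.isPrefixOf (p.drop i))).length

/-- Number of plateaus: occurrences of a subword U F^k D for some k ≥ 0. -/
def plt (p : List Step) : ℕ :=
  ((List.range p.length).filter (fun i =>
    (List.range p.length).any (fun k =>
      (Step.U :: (List.replicate k Step.F ++ [Step.D])).isPrefixOf (p.drop i)))).length
open PowerSeries Polynomial

/-- The generating function F(x,t) = Σ_n Σ_{μ ∈ M_n} t^{asc μ} x^n for Motzkin paths
by length and number of ascents, as a power series in x over ℚ[t]. -/
noncomputable def Fasc : PowerSeries (Polynomial ℚ) :=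
  PowerSeries.mk fun n =>
    ∑ f : Fin n → Step,
      if IsMotzkin (List.ofFn f) then (Polynomial.X : Polynomial ℚ) ^ asc (List.ofFn f) else 0

lemma stepVal_ge : ∀ s, -1 ≤ stepVal s := by decide
lemma stepVal_eq_neg_one : ∀ s, stepVal s = -1 → s = Step.D := by decide

lemma ht_zero (p : List Step) : ht p 0 = 0 := rfl

lemma ht_cons (a : Step) (p : List Step) (i : ℕ) :
    ht (a :: p) (i + 1) = stepVal a + ht p i := by
  simp [ht, List.take_succ_cons]

lemma ht_of_length_le (p : List Step) (i : ℕ) (h : p.length ≤ i) :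
    ht p i = ht p p.length := by
  simp [ht, List.take_of_length_le h, List.take_length]

lemma ht_succ (p : List Step) (i : ℕ) (h : i < p.length) :
    ht p (i + 1) = ht p i + stepVal p[i] := by
  unfold ht
  rw [List.take_succ, List.getElem?_eq_getElem h, List.map_append, List.sum_append]
  simp

lemma asc_cons (a : Step) (l : List Step) :
    asc (a :: l) = asc l + (if a = Step.U ∧ l.head? ≠ some Step.U then 1 else 0) := by
  unfold asc
  rw [List.length_cons, List.range_succ_eq_map]
  rw [List.filter_cons, List.filter_map]
  have h1 : ((fun i => (a :: l)[i]? == some Step.U && (a :: l)[i + 1]? != some Step.U) ∘ Nat.succ)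
      = (fun i => l[i]? == some Step.U && l[i+1]? != some Step.U) := by
    funext i; simp [Function.comp, List.getElem?_cons_succ]
  rw [h1]
  have h2 : ((a :: l)[0]? == some Step.U && (a :: l)[0 + 1]? != some Step.U)
      = (a = Step.U ∧ l.head? ≠ some Step.U : Bool) := by
    cases l with
    | nil => cases a <;> simp
    | cons b l' => cases a <;> cases b <;> simp
  rw [h2]
  by_cases h : a = Step.U ∧ l.head? ≠ some Step.U <;> simp [h, Nat.add_comm]

lemma asc_nil : asc [] = 0 := rfl

lemma asc_append (l m : List Step) (h : l.getLast? ≠ some Step.U) :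
    asc (l ++ m) = asc l + asc m := by
  induction l with
  | nil => simp [asc_nil]
  | cons a l ih =>
    cases l with
    | nil =>
      simp only [List.getLast?_singleton] at h
      have ha : a ≠ Step.U := fun hc => h (by rw [hc])
      simp [asc_cons, ha, asc_nil]
    | cons b l' =>
      rw [List.cons_append, asc_cons, asc_cons, ih (by simpa using h)]
      rw [List.head?_append_of_ne_nil _ (by simp)]
      ring

lemma motzkin_nil : IsMotzkin ([] : List Step) := by
  constructor <;> simp [ht]

lemma ht_append_le (l m : List Step) (i : ℕ) (h : i ≤ l.length) :
    ht (l ++ m) i = ht l i := by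
  unfold ht; rw [List.take_append_of_le_length h]

lemma ht_append_add (l m : List Step) (i : ℕ) :
    ht (l ++ m) (l.length + i) = ht l l.length + ht m i := by
  unfold ht
  rw [List.take_append, List.take_of_length_le (show l.length ≤ l.length + i by omega),
    Nat.add_sub_cancel_left]
  simp [List.map_append, List.sum_append]

lemma motzkin_cons_F (p : List Step) : IsMotzkin (Step.F :: p) ↔ IsMotzkin p := by
  constructor
  · rintro ⟨h1, h2⟩
    refine ⟨?_, fun i hi => ?_⟩
    · have := h1; rw [List.length_cons, ht_cons] at this; simpa [stepVal] using this
    · have := h2 (i+1) (by simpa using Nat.succ_le_succ hi)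
      rw [ht_cons] at this; simpa [stepVal] using this
  · rintro ⟨h1, h2⟩
    refine ⟨?_, fun i hi => ?_⟩
    · rw [List.length_cons, ht_cons]; simpa [stepVal] using h1
    · cases i with
      | zero => simp [ht_zero]
      | succ j =>
        rw [ht_cons]
        have := h2 j (by simpa using hi)
        simpa [stepVal] using this

lemma not_motzkin_cons_D (p : List Step) : ¬ IsMotzkin (Step.D :: p) := by
  rintro ⟨h1, h2⟩
  have := h2 1 (by simp)
  rw [show (1:ℕ) = 0 + 1 from rfl, ht_cons] at this
  simp [ht_zero, stepVal] at this

lemma motzkin_getLast_ne_U (p : List Step) (hp : IsMotzkin p) : p.getLast? ≠ some Step.U := by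
  cases p with
  | nil => simp
  | cons a q =>
    intro hl
    obtain ⟨h1, h2⟩ := hp
    set n := (a :: q).length with hn
    have hlen : 0 < n := by simp [hn]
    have hgl : (a :: q).getLast? = (a :: q)[n-1]? := List.getLast?_eq_getElem?
    have hlt : n - 1 < n := Nat.sub_lt hlen one_pos
    have hget : (a :: q)[n-1] = Step.U := by
      rw [hgl, List.getElem?_eq_getElem hlt] at hl
      exact Option.some_injective _ hl
    have hstep := ht_succ (a :: q) (n-1) hlt
    rw [Nat.sub_add_cancel hlen] at hstep
    have hnn := h2 (n-1) (Nat.le_of_lt hlt)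
    rw [h1, hget] at hstep
    simp [stepVal] at hstep
    omega

lemma stepVal_le : ∀ s, stepVal s ≤ 1 := by decide

lemma motzkin_UD (μ' μ : List Step) (h1 : IsMotzkin μ') (h2 : IsMotzkin μ) :
    IsMotzkin (Step.U :: (μ' ++ Step.D :: μ)) := by
  obtain ⟨h1t, h1n⟩ := h1
  obtain ⟨h2t, h2n⟩ := h2
  have key : ∀ k ≤ (μ' ++ Step.D :: μ).length,
      ht (μ' ++ Step.D :: μ) k = (if k ≤ μ'.length then ht μ' k else ht μ (k - μ'.length - 1) - 1) := by
    intro k hk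
    by_cases h : k ≤ μ'.length
    · rw [if_pos h, ht_append_le _ _ _ h]
    · rw [if_neg h]
      push_neg at h
      obtain ⟨j, rfl⟩ : ∃ j, k = μ'.length + (j + 1) := ⟨k - μ'.length - 1, by omega⟩
      rw [ht_append_add, ht_cons, h1t]
      simp [stepVal]
      ring
  constructor
  · rw [List.length_cons, ht_cons, key _ (le_refl _)]
    rw [if_neg (by simp)]
    have hl : (μ' ++ Step.D :: μ).length - μ'.length - 1 = μ.length := by simp
    rw [hl, h2t]
    simp [stepVal]
  · intro i hi
    cases i with
    | zero => simp [ht_zero]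
    | succ k =>
      rw [ht_cons]
      rw [List.length_cons] at hi
      have hk : k ≤ (μ' ++ Step.D :: μ).length := by omega
      rw [key k hk]
      by_cases h : k ≤ μ'.length
      · rw [if_pos h]
        have := h1n k h
        simp [stepVal]; omega
      · rw [if_neg h]
        push_neg at h
        have := h2n (k - μ'.length - 1) (by simp at hk ⊢; omega)
        simp [stepVal]; omega

lemma asc_UD (μ' μ : List Step) (h1 : IsMotzkin μ') :
    asc (Step.U :: (μ' ++ Step.D :: μ)) =
      asc μ' + asc μ + (if μ'.head? ≠ some Step.U then 1 else 0) := by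
  have hl := motzkin_getLast_ne_U μ' h1
  rw [asc_cons, asc_append _ _ hl, asc_cons]
  have hD : ¬ (Step.D = Step.U ∧ μ.head? ≠ some Step.U) := by rintro ⟨h,-⟩; exact Step.noConfusion h
  rw [if_neg hD]
  cases μ' with
  | nil => simp [asc_nil]
  | cons b l' =>
    rw [List.head?_append_of_ne_nil _ (by simp)]
    simp only [List.head?_cons]
    by_cases hb : b = Step.U <;> simp [hb]

lemma UD_lt_aux (μ₁' μ₁ μ₂' μ₂ : List Step) (h1 : IsMotzkin μ₁') (h2 : IsMotzkin μ₂')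
    (heq : μ₁' ++ Step.D :: μ₁ = μ₂' ++ Step.D :: μ₂) : ¬ (μ₁'.length < μ₂'.length) := by
  intro hlt
  set l1 := μ₁'.length
  have hgetL : (μ₁' ++ Step.D :: μ₁)[l1]'(by simp [l1]) = Step.D := by
    rw [List.getElem_append_right (le_refl l1)]
    simp [l1]
  have hgetR : μ₂'[l1]'hlt = Step.D := by
    have h' : (μ₂' ++ Step.D :: μ₂)[l1]? = some Step.D := by
      rw [← heq, List.getElem?_eq_getElem (show l1 < (μ₁' ++ Step.D :: μ₁).length by simp [l1]),
        hgetL]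
    rw [List.getElem?_append_left hlt, List.getElem?_eq_getElem hlt] at h'
    injection h'
  have hht : ht μ₂' l1 = 0 := by
    have e1 : ht (μ₁' ++ Step.D :: μ₁) l1 = ht μ₁' l1 := ht_append_le _ _ _ (le_refl _)
    have e2 : ht (μ₂' ++ Step.D :: μ₂) l1 = ht μ₂' l1 := ht_append_le _ _ _ (le_of_lt hlt)
    rw [heq] at e1
    rw [e2] at e1
    rw [e1]
    exact h1.1
  have hstep := ht_succ μ₂' l1 hlt
  rw [hht, hgetR] at hstep
  have := h2.2 (l1 + 1) hlt
  rw [hstep] at this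
  simp [stepVal] at this

lemma UD_inj (μ₁' μ₁ μ₂' μ₂ : List Step) (h1 : IsMotzkin μ₁') (h2 : IsMotzkin μ₂')
    (heq : μ₁' ++ Step.D :: μ₁ = μ₂' ++ Step.D :: μ₂) : μ₁' = μ₂' ∧ μ₁ = μ₂ := by
  have hlen : μ₁'.length = μ₂'.length := by
    have a1 := UD_lt_aux μ₁' μ₁ μ₂' μ₂ h1 h2 heq
    have a2 := UD_lt_aux μ₂' μ₂ μ₁' μ₁ h2 h1 heq.symm
    omega
  obtain ⟨e1, e2⟩ := List.append_inj heq hlen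
  exact ⟨e1, by injection e2⟩

lemma ht_drop (r : List Step) (j i : ℕ) :
    ht r (j + i) = ht r j + ht (r.drop j) i := by
  unfold ht
  rw [List.take_add, List.map_append, List.sum_append]

lemma motzkin_U_decomp (p : List Step) (hp : IsMotzkin p) (hh : p.head? = some Step.U) :
    ∃ μ' μ, IsMotzkin μ' ∧ IsMotzkin μ ∧ p = Step.U :: (μ' ++ Step.D :: μ) := by
  obtain ⟨r, rfl⟩ : ∃ r, p = Step.U :: r := by
    cases p with
    | nil => simp at hh
    | cons a q => exact ⟨q, by injection hh with h; rw [h]⟩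
  obtain ⟨hpt, hpn⟩ := hp
  have hr : ∀ k, ht (Step.U :: r) (k+1) = 1 + ht r k := by
    intro k; rw [ht_cons]; simp [stepVal]
  have hrt : ht r r.length = -1 := by
    rw [List.length_cons] at hpt
    rw [hr] at hpt; omega
  have hex : ∃ j, ht r j < 0 := ⟨r.length, by omega⟩
  classical
  set j0 := Nat.find hex with hj0
  have hfind : ht r j0 < 0 := Nat.find_spec hex
  have hmin : ∀ k < j0, 0 ≤ ht r k := by
    intro k hk
    have := Nat.find_min hex hk
    omega
  have hj0pos : 1 ≤ j0 := by
    rcases Nat.eq_zero_or_pos j0 with h | h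
    · rw [h, ht_zero] at hfind; omega
    · exact h
  have hj0le : j0 ≤ r.length := Nat.find_le (by omega)
  have hlt : j0 - 1 < r.length := by omega
  have hstep := ht_succ r (j0 - 1) hlt
  rw [Nat.sub_add_cancel hj0pos] at hstep
  have hprev : 0 ≤ ht r (j0 - 1) := hmin _ (by omega)
  have hval1 := stepVal_ge (r[j0-1])
  have hval2 := stepVal_le (r[j0-1])
  have hD : r[j0-1] = Step.D := stepVal_eq_neg_one _ (by omega)
  have hhtprev : ht r (j0 - 1) = 0 := by omega
  have hhtj0 : ht r j0 = -1 := by rw [hstep, hD]; simp [stepVal]; omega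
  refine ⟨r.take (j0 - 1), r.drop j0, ⟨?_, ?_⟩, ⟨?_, ?_⟩, ?_⟩
  · -- total of take
    have hL : (r.take (j0-1)).length = j0 - 1 := by rw [List.length_take]; omega
    have : ht (r.take (j0-1)) ((r.take (j0-1)).length) = ht r (j0-1) := by
      unfold ht
      rw [hL, List.take_take, min_self]
    rw [this, hhtprev]
  · intro i hi
    rw [List.length_take] at hi
    have hi' : i ≤ j0 - 1 := le_trans hi (by omega)
    have : ht (r.take (j0-1)) i = ht r i := by
      unfold ht
      rw [List.take_take, min_eq_left hi']
    rw [this]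
    exact hmin i (by omega)
  · -- total of drop
    have := ht_drop r j0 (r.length - j0)
    rw [show j0 + (r.length - j0) = r.length by omega] at this
    rw [List.length_drop]
    omega
  · intro i hi
    rw [List.length_drop] at hi
    have := ht_drop r j0 i
    have h2 := hpn (j0 + i + 1) (by simp; omega)
    rw [hr] at h2
    omega
  · congr 1
    have hdrop : r.drop (j0 - 1) = r[j0-1] :: r.drop (j0 - 1 + 1) := List.drop_eq_getElem_cons hlt
    rw [Nat.sub_add_cancel hj0pos] at hdrop
    rw [hD] at hdrop
    conv_lhs => rw [← List.take_append_drop (j0-1) r, hdrop]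

def LL (n : ℕ) : Finset (List Step) := (Finset.univ : Finset (Fin n → Step)).image List.ofFn

lemma mem_LL {n : ℕ} {p : List Step} : p ∈ LL n ↔ p.length = n := by
  constructor
  · rintro h
    obtain ⟨f, -, rfl⟩ := Finset.mem_image.1 h
    simp
  · intro h
    refine Finset.mem_image.2 ⟨fun i => p[(i:ℕ)]'(by omega), Finset.mem_univ _, ?_⟩
    subst h
    exact List.ofFn_getElem

def MM (n : ℕ) : Finset (List Step) := (LL n).filter IsMotzkin

lemma mem_MM {n : ℕ} {p : List Step} : p ∈ MM n ↔ p.length = n ∧ IsMotzkin p := by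
  simp [MM, Finset.mem_filter, mem_LL]

noncomputable def aa (n : ℕ) : Polynomial ℚ :=
  ∑ p ∈ MM n, (Polynomial.X : Polynomial ℚ) ^ asc p

noncomputable def bb (n : ℕ) : Polynomial ℚ :=
  ∑ p ∈ (MM n).filter (fun p => p.head? = some Step.U), (Polynomial.X : Polynomial ℚ) ^ asc p

lemma coeff_Fasc (n : ℕ) : PowerSeries.coeff n Fasc = aa n := by
  rw [Fasc, PowerSeries.coeff_mk, aa]
  rw [show MM n = (LL n).filter IsMotzkin from rfl, Finset.sum_filter, LL,
    Finset.sum_image (by intro x _ y _ h; exact List.ofFn_injective h)]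

lemma aa_zero : aa 0 = 1 := by
  have : MM 0 = {[]} := by
    ext p
    simp [mem_MM, List.length_eq_zero_iff]
    rintro rfl
    exact motzkin_nil
  simp [aa, this, asc_nil]

lemma bb_small (n : ℕ) (hn : n < 2) : bb n = 0 := by
  rw [bb]
  have : (MM n).filter (fun p => p.head? = some Step.U) = ∅ := by
    rw [Finset.filter_eq_empty_iff]
    intro p hp hU
    rw [mem_MM] at hp
    obtain ⟨μ', μ, -, -, rfl⟩ := motzkin_U_decomp p hp.2 hU
    have := hp.1
    simp at this
    omega
  simp [this]

lemma rec1 (n : ℕ) : aa (n+1) = aa n + bb (n+1) := by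
  rw [aa, ← Finset.sum_filter_add_sum_filter_not (MM (n+1)) (fun p => p.head? = some Step.U),
    add_comm]
  congr 1
  rw [aa]
  refine Finset.sum_bij' (fun p _ => p.tail) (fun μ _ => Step.F :: μ) ?_ ?_ ?_ ?_ ?_
  · intro p hp
    rw [Finset.mem_filter, mem_MM] at hp
    obtain ⟨⟨hlen, hmo⟩, hU⟩ := hp
    match p, hlen with
    | a :: q, hlen =>
      cases a with
      | U => simp at hU
      | F => rw [mem_MM]
             exact ⟨by simpa using hlen, (motzkin_cons_F q).1 hmo⟩
      | D => exact absurd hmo (not_motzkin_cons_D q)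
  · intro μ hμ
    rw [mem_MM] at hμ
    rw [Finset.mem_filter, mem_MM]
    refine ⟨⟨by simp [hμ.1], (motzkin_cons_F μ).2 hμ.2⟩, by simp⟩
  · intro p hp
    rw [Finset.mem_filter, mem_MM] at hp
    obtain ⟨⟨hlen, hmo⟩, hU⟩ := hp
    match p, hlen with
    | a :: q, hlen =>
      cases a with
      | U => simp at hU
      | F => rfl
      | D => exact absurd hmo (not_motzkin_cons_D q)
  · intro μ hμ
    rfl
  · intro p hp
    rw [Finset.mem_filter, mem_MM] at hp
    obtain ⟨⟨hlen, hmo⟩, hU⟩ := hp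
    match p, hlen with
    | a :: q, hlen =>
      cases a with
      | U => simp at hU
      | F => rw [asc_cons]; simp
      | D => exact absurd hmo (not_motzkin_cons_D q)

lemma step_A (i : ℕ) :
    ∑ μ' ∈ MM i, (Polynomial.X : Polynomial ℚ) ^ asc μ' *
        (if μ'.head? ≠ some Step.U then Polynomial.X else 1)
      = Polynomial.X * aa i + (1 - Polynomial.X) * bb i := by
  have hsplit := Finset.sum_filter_add_sum_filter_not (MM i) (fun p => p.head? = some Step.U)
    (fun p => (Polynomial.X : Polynomial ℚ) ^ asc p)
  rw [← Finset.sum_filter_add_sum_filter_not (MM i) (fun p => p.head? = some Step.U)]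
  have e1 : ∑ μ' ∈ (MM i).filter (fun p => p.head? = some Step.U),
      (Polynomial.X : Polynomial ℚ) ^ asc μ' * (if μ'.head? ≠ some Step.U then Polynomial.X else 1)
      = bb i := by
    rw [bb]
    refine Finset.sum_congr rfl ?_
    intro p hp
    rw [Finset.mem_filter] at hp
    simp [hp.2]
  have e2 : ∑ μ' ∈ (MM i).filter (fun p => ¬ p.head? = some Step.U),
      (Polynomial.X : Polynomial ℚ) ^ asc μ' * (if μ'.head? ≠ some Step.U then Polynomial.X else 1)
      = (∑ μ' ∈ (MM i).filter (fun p => ¬ p.head? = some Step.U),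
          (Polynomial.X : Polynomial ℚ) ^ asc μ') * Polynomial.X := by
    rw [Finset.sum_mul]
    refine Finset.sum_congr rfl ?_
    intro p hp
    rw [Finset.mem_filter] at hp
    simp [hp.2]
  rw [e1, e2]
  have haa : aa i = bb i + ∑ μ' ∈ (MM i).filter (fun p => ¬ p.head? = some Step.U),
      (Polynomial.X : Polynomial ℚ) ^ asc μ' := by
    rw [aa, ← hsplit, bb]
  rw [haa]
  ring

lemma rec2 (n : ℕ) : bb (n+2) = ∑ ij ∈ Finset.HasAntidiagonal.antidiagonal n,
    (Polynomial.X * aa ij.1 + (1 - Polynomial.X) * bb ij.1) * aa ij.2 := by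
  have hterm : ∀ ij : ℕ × ℕ,
      (Polynomial.X * aa ij.1 + (1 - Polynomial.X) * bb ij.1) * aa ij.2
      = ∑ q ∈ (MM ij.1) ×ˢ (MM ij.2), (Polynomial.X : Polynomial ℚ) ^
          (asc q.1 + asc q.2 + if q.1.head? ≠ some Step.U then 1 else 0) := by
    intro ij
    rw [← step_A, aa, Finset.sum_mul_sum]
    rw [Finset.sum_product]
    refine Finset.sum_congr rfl ?_
    intro μ' _
    refine Finset.sum_congr rfl ?_
    intro μ _
    by_cases h : μ'.head? = some Step.U <;> simp [h] <;> ring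
  rw [Finset.sum_congr rfl (fun ij _ => hterm ij)]
  rw [Finset.sum_sigma']
  rw [bb]
  refine (Finset.sum_bij (fun q _ => Step.U :: (q.2.1 ++ Step.D :: q.2.2)) ?_ ?_ ?_ ?_).symm
  · rintro ⟨⟨i, j⟩, μ', μ⟩ hq
    rw [Finset.mem_sigma, Finset.HasAntidiagonal.mem_antidiagonal, Finset.mem_product] at hq
    obtain ⟨hij, h1, h2⟩ := hq
    rw [mem_MM] at h1 h2
    rw [Finset.mem_filter, mem_MM]
    refine ⟨⟨?_, motzkin_UD _ _ h1.2 h2.2⟩, by simp⟩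
    have e1 := h1.1
    have e2 := h2.1
    dsimp only at e1 e2 hij
    simp only [List.length_cons, List.length_append]
    omega
  · rintro ⟨⟨i1, j1⟩, μ1', μ1⟩ hq1 ⟨⟨i2, j2⟩, μ2', μ2⟩ hq2 heq
    rw [Finset.mem_sigma, Finset.HasAntidiagonal.mem_antidiagonal, Finset.mem_product] at hq1 hq2
    simp only [mem_MM] at hq1 hq2
    simp only [List.cons.injEq, true_and] at heq
    obtain ⟨e1, e2⟩ := UD_inj _ _ _ _ hq1.2.1.2 hq2.2.1.2 heq
    subst e1; subst e2
    have : i1 = i2 := by rw [← hq1.2.1.1, ← hq2.2.1.1]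
    have hj : j1 = j2 := by rw [← hq1.2.2.1, ← hq2.2.2.1]
    subst this; subst hj
    rfl
  · intro p hp
    rw [Finset.mem_filter, mem_MM] at hp
    obtain ⟨⟨hlen, hmo⟩, hU⟩ := hp
    obtain ⟨μ', μ, h1, h2, rfl⟩ := motzkin_U_decomp p hmo hU
    have hl : μ'.length + μ.length = n := by
      simp at hlen
      omega
    refine ⟨⟨⟨μ'.length, μ.length⟩, μ', μ⟩, ?_, rfl⟩
    rw [Finset.mem_sigma, Finset.HasAntidiagonal.mem_antidiagonal, Finset.mem_product]
    exact ⟨hl, mem_MM.2 ⟨rfl, h1⟩, mem_MM.2 ⟨rfl, h2⟩⟩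
  · rintro ⟨⟨i, j⟩, μ', μ⟩ hq
    rw [Finset.mem_sigma, Finset.HasAntidiagonal.mem_antidiagonal, Finset.mem_product] at hq
    simp only [mem_MM] at hq
    rw [asc_UD _ _ hq.2.1.2]

noncomputable def Bs : PowerSeries (Polynomial ℚ) := PowerSeries.mk bb

lemma coeff_Bs (n : ℕ) : PowerSeries.coeff n Bs = bb n := PowerSeries.coeff_mk n bb

lemma h1 : Fasc = 1 + PowerSeries.X * Fasc + Bs := by
  refine PowerSeries.ext fun n => ?_
  rw [coeff_Fasc, map_add, map_add, coeff_Bs, PowerSeries.coeff_one]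
  rw [show (PowerSeries.X : PowerSeries (Polynomial ℚ)) * Fasc = Fasc * PowerSeries.X ^ 1 by ring]
  rw [PowerSeries.coeff_mul_X_pow']
  cases n with
  | zero => simp [aa_zero, bb_small 0 (by norm_num)]
  | succ m =>
    rw [if_neg (show ¬ (m+1 = 0) by omega), if_pos (show 1 ≤ m+1 by omega)]
    simpa [coeff_Fasc] using rec1 m

lemma h2 : Bs = PowerSeries.X ^ 2 *
    (PowerSeries.C (R := Polynomial ℚ) Polynomial.X * Fasc
      + (1 - PowerSeries.C (R := Polynomial ℚ) Polynomial.X) * Bs) * Fasc := by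
  refine PowerSeries.ext fun n => ?_
  rw [coeff_Bs]
  rw [show PowerSeries.X ^ 2 *
      (PowerSeries.C (R := Polynomial ℚ) Polynomial.X * Fasc
        + (1 - PowerSeries.C (R := Polynomial ℚ) Polynomial.X) * Bs) * Fasc
    = ((PowerSeries.C (R := Polynomial ℚ) Polynomial.X * Fasc
        + (1 - PowerSeries.C (R := Polynomial ℚ) Polynomial.X) * Bs) * Fasc) * PowerSeries.X ^ 2
    by ring]
  rw [PowerSeries.coeff_mul_X_pow']
  match n with
  | 0 => rw [if_neg (by omega)]; exact bb_small 0 (by norm_num)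
  | 1 => rw [if_neg (by omega)]; exact bb_small 1 (by norm_num)
  | (m+2) =>
    rw [if_pos (by omega)]
    have : m + 2 - 2 = m := by omega
    rw [this, PowerSeries.coeff_mul, rec2]
    refine Finset.sum_congr rfl ?_
    intro ij _
    have e : ((1 : PowerSeries (Polynomial ℚ)) - PowerSeries.C (R := Polynomial ℚ) Polynomial.X) * Bs
        = Bs - PowerSeries.C (R := Polynomial ℚ) Polynomial.X * Bs := by ring
    rw [e, map_add, map_sub, coeff_Bs, PowerSeries.coeff_C_mul, PowerSeries.coeff_C_mul,
      coeff_Fasc, coeff_Fasc, coeff_Bs]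
    ring


/-- F(x,t) satisfies (x² + x³(t−1))F² − (1 − x − x²(t−1))F + 1 = 0. -/
theorem ascents_functional_equation :
    (PowerSeries.X ^ 2 + PowerSeries.X ^ 3 * (PowerSeries.C (R := Polynomial ℚ) Polynomial.X - 1))
        * Fasc ^ 2
      - (1 - PowerSeries.X - PowerSeries.X ^ 2
          * (PowerSeries.C (R := Polynomial ℚ) Polynomial.X - 1)) * Fasc
      + 1 = 0 := by
  have e1 := h1
  have e2 := h2
  linear_combination (-1 : PowerSeries (Polynomial ℚ)) * e2
    - (1 - PowerSeries.X ^ 2 * (1 - PowerSeries.C (R := Polynomial ℚ) Polynomial.X) * Fasc) * e1
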